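/- Fix (a₀,a₁) ∈ ℂ²∖{0} and let L be the ruling line of points of P¹×P¹ with first coordinate [a₀:a₁]. Then the set of forms f ∈ V that are singular at every point of L equals (a₁x₀ − a₀x₁)² · V₍₁,₃₎, where V₍₁,₃₎ is the space of bihomogeneous forms of bidegree (1,3); in particular this set is a complex linear subspace of V of dimension 8 (codimension 8). -/

import Mathlib

open MvPolynomial

noncomputable section

/-- The polynomial ring `ℂ[x₀, x₁, y₀, y₁]`, with variables indexed by `Fin 4`:
`x₀ = X 0`, `x₁ = X 1`, `y₀ = X 2`, `y₁ = X 3`. -/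
abbrev P4 : Type := MvPolynomial (Fin 4) ℂ

/-- Weights picking out the degree in the variables `x₀, x₁`. -/
def wx : Fin 4 → ℕ := ![1, 1, 0, 0]

/-- Weights picking out the degree in the variables `y₀, y₁`. -/
def wy : Fin 4 → ℕ := ![0, 0, 1, 1]

/-- The 16-dimensional space `V` of bihomogeneous forms of bidegree `(3,3)`. -/
def V33 : Submodule ℂ P4 :=
  weightedHomogeneousSubmodule ℂ wx 3 ⊓ weightedHomogeneousSubmodule ℂ wy 3

/-- A form `f` is singular at the point with representative `p ∈ ℂ⁴` if all four partial
derivatives of `f` vanish at `p`. -/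
def SingularAt (f : P4) (p : Fin 4 → ℂ) : Prop :=
  ∀ i : Fin 4, eval p (pderiv i f) = 0

/-- The 8-dimensional space of bihomogeneous forms of bidegree `(1,3)`. -/
def V13 : Submodule ℂ P4 :=
  weightedHomogeneousSubmodule ℂ wx 1 ⊓ weightedHomogeneousSubmodule ℂ wy 3

/-! ### Auxiliary lemmas -/

lemma weight_four (w : Fin 4 → ℕ) (d : Fin 4 →₀ ℕ) :
    Finsupp.weight w d = d 0 * w 0 + d 1 * w 1 + d 2 * w 2 + d 3 * w 3 := by
  rw [Finsupp.weight_apply, Finsupp.sum_fintype]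
  · simp [Fin.sum_univ_four, mul_comm]
  · intro i; simp

/-- The exponent vector `(m-i, i, n-j, j)`. -/
def Dm (m n i j : ℕ) : Fin 4 →₀ ℕ :=
  Finsupp.single 0 (m - i) + Finsupp.single 1 i + Finsupp.single 2 (n - j) + Finsupp.single 3 j

lemma Dm_apply (m n i j : ℕ) :
    Dm m n i j 0 = m - i ∧ Dm m n i j 1 = i ∧ Dm m n i j 2 = n - j ∧ Dm m n i j 3 = j := by
  refine ⟨?_, ?_, ?_, ?_⟩ <;> simp [Dm, Finsupp.single_apply]

/-- Decomposition of a bihomogeneous form into its (finitely many) monomials. -/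
lemma dec (m n : ℕ) (f : P4) (hx : f.IsWeightedHomogeneous wx m)
    (hy : f.IsWeightedHomogeneous wy n) :
    f = ∑ i ∈ Finset.range (m+1), ∑ j ∈ Finset.range (n+1),
      monomial (Dm m n i j) (coeff (Dm m n i j) f) := by
  have hsub : f.support ⊆ (Finset.range (m+1) ×ˢ Finset.range (n+1)).image
      (fun p => Dm m n p.1 p.2) := by
    intro d hd
    have hc : coeff d f ≠ 0 := (MvPolynomial.mem_support_iff).1 hd
    have h1 := hx hc
    have h2 := hy hc
    rw [weight_four] at h1 h2
    simp only [wx, wy] at h1 h2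
    norm_num [Matrix.cons_val_one, Matrix.head_cons] at h1 h2
    simp only [show (![1, 1, 0, 0] : Fin 4 → ℕ) 2 = 0 from rfl, show (![1, 1, 0, 0] : Fin 4 → ℕ) 3 = 0 from rfl, show (![0, 0, 1, 1] : Fin 4 → ℕ) 2 = 1 from rfl, show (![0, 0, 1, 1] : Fin 4 → ℕ) 3 = 1 from rfl, mul_zero, mul_one, add_zero] at h1 h2
    simp only [Finset.mem_image, Finset.mem_product, Finset.mem_range]
    refine ⟨(d 1, d 3), ⟨by omega, by omega⟩, ?_⟩
    ext k
    obtain ⟨e0, e1, e2, e3⟩ := Dm_apply m n (d 1) (d 3)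
    fin_cases k <;> simp_all <;> omega
  have hinj : ∀ p ∈ Finset.range (m+1) ×ˢ Finset.range (n+1),
      ∀ q ∈ Finset.range (m+1) ×ˢ Finset.range (n+1),
      Dm m n p.1 p.2 = Dm m n q.1 q.2 → p = q := by
    intro p hp q hq hpq
    obtain ⟨e0, e1, e2, e3⟩ := Dm_apply m n p.1 p.2
    obtain ⟨f0, f1, f2, f3⟩ := Dm_apply m n q.1 q.2
    have h1 := DFunLike.congr_fun hpq 1
    have h3 := DFunLike.congr_fun hpq 3
    simp only [e1, e3, f1, f3] at h1 h3
    exact Prod.ext h1 h3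
  calc f = ∑ d ∈ f.support, monomial d (coeff d f) :=
        (MvPolynomial.support_sum_monomial_coeff f).symm
    _ = ∑ d ∈ (Finset.range (m+1) ×ˢ Finset.range (n+1)).image (fun p => Dm m n p.1 p.2),
          monomial d (coeff d f) := by
        refine Finset.sum_subset hsub (fun d _ hd => ?_)
        rw [MvPolynomial.notMem_support_iff.1 hd, monomial_zero]
    _ = _ := by rw [Finset.sum_image hinj, Finset.sum_product]

lemma monomial_Dm (m n i j : ℕ) (c : ℂ) :
    (monomial (Dm m n i j) c : P4) = C c * X 0^(m-i) * X 1^i * X 2^(n-j) * X 3^j := by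
  simp only [X_pow_eq_monomial, C_apply, monomial_mul, Dm, one_mul, mul_one, zero_add]

/-- A binary cubic with vanishing value and gradient at `(a₀,a₁) ≠ 0` is divisible by the
square of the corresponding linear form. -/
lemma cubic_double_root (a₀ a₁ c₀ c₁ c₂ c₃ : ℂ) (ha : ¬(a₀ = 0 ∧ a₁ = 0))
    (h1 : c₀*a₀^3 + c₁*a₀^2*a₁ + c₂*a₀*a₁^2 + c₃*a₁^3 = 0)
    (h2 : 3*c₀*a₀^2 + 2*c₁*a₀*a₁ + c₂*a₁^2 = 0)
    (h3 : c₁*a₀^2 + 2*c₂*a₀*a₁ + 3*c₃*a₁^2 = 0) :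
    ∃ u v : ℂ, c₀ = a₁^2*u ∧ c₁ = a₁^2*v - 2*a₀*a₁*u ∧ c₂ = a₀^2*u - 2*a₀*a₁*v ∧ c₃ = a₀^2*v := by
  by_cases h : a₀ = 0
  · subst h
    have ha1 : a₁ ≠ 0 := by tauto
    have hc2 : c₂ = 0 := by
      have := h2
      rcases mul_eq_zero.1 (by linear_combination this : c₂ * a₁^2 = 0) with h' | h'
      · exact h'
      · exact absurd ((pow_eq_zero_iff two_ne_zero).1 h') ha1
    have hc3 : c₃ = 0 := by
      have h3' : c₃ * (3 * a₁^2) = 0 := by linear_combination h3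
      rcases mul_eq_zero.1 h3' with h' | h'
      · exact h'
      · rcases mul_eq_zero.1 h' with h'' | h''
        · norm_num at h''
        · exact absurd ((pow_eq_zero_iff two_ne_zero).1 h'') ha1
    refine ⟨c₀/a₁^2, c₁/a₁^2, by field_simp, by field_simp; ring, by simp [hc2], by simp [hc3]⟩
  · refine ⟨(c₂*a₀^2 + 2*a₀*a₁*c₃)/a₀^4, c₃/a₀^2, ?_, ?_, ?_, by field_simp⟩
    · field_simp
      linear_combination h1 - a₁*h3
    · field_simp
      linear_combination h3
    · field_simp
      ring

/-- The 16-coefficient generic bihomogeneous form of bidegree (3,3). -/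
def Fc (c : ℕ → ℕ → ℂ) : P4 :=
  ∑ i ∈ Finset.range 4, ∑ j ∈ Finset.range 4,
    C (c i j) * X 0^(3-i) * X 1^i * X 2^(3-j) * X 3^j

/-- The generic bihomogeneous form of bidegree (1,3). -/
def Gc (u0 u1 u2 u3 v0 v1 v2 v3 : ℂ) : P4 :=
    (C u0 * X 0 + C v0 * X 1) * X 2^3 * X 3^0
  + (C u1 * X 0 + C v1 * X 1) * X 2^2 * X 3^1
  + (C u2 * X 0 + C v2 * X 1) * X 2^1 * X 3^2
  + (C u3 * X 0 + C v3 * X 1) * X 2^0 * X 3^3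

lemma ev0 (c : ℕ → ℕ → ℂ) (a₀ a₁ b₀ b₁ : ℂ) :
    eval ![a₀,a₁,b₀,b₁] (pderiv 0 (Fc c)) =
      (3*c 0 0*a₀^2 + 2*c 1 0*a₀*a₁ + c 2 0*a₁^2)*b₀^3
    + (3*c 0 1*a₀^2 + 2*c 1 1*a₀*a₁ + c 2 1*a₁^2)*b₀^2*b₁
    + (3*c 0 2*a₀^2 + 2*c 1 2*a₀*a₁ + c 2 2*a₁^2)*b₀*b₁^2
    + (3*c 0 3*a₀^2 + 2*c 1 3*a₀*a₁ + c 2 3*a₁^2)*b₁^3 := by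
  simp [Fc, Finset.sum_range_succ, pderiv_mul, pderiv_X_self, pderiv_X_of_ne, pderiv_C, pderiv_pow]
  ring

lemma ev1 (c : ℕ → ℕ → ℂ) (a₀ a₁ b₀ b₁ : ℂ) :
    eval ![a₀,a₁,b₀,b₁] (pderiv 1 (Fc c)) =
      (c 1 0*a₀^2 + 2*c 2 0*a₀*a₁ + 3*c 3 0*a₁^2)*b₀^3
    + (c 1 1*a₀^2 + 2*c 2 1*a₀*a₁ + 3*c 3 1*a₁^2)*b₀^2*b₁
    + (c 1 2*a₀^2 + 2*c 2 2*a₀*a₁ + 3*c 3 2*a₁^2)*b₀*b₁^2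
    + (c 1 3*a₀^2 + 2*c 2 3*a₀*a₁ + 3*c 3 3*a₁^2)*b₁^3 := by
  simp [Fc, Finset.sum_range_succ, pderiv_mul, pderiv_X_self, pderiv_X_of_ne, pderiv_C, pderiv_pow]
  ring

lemma ev2 (c : ℕ → ℕ → ℂ) (a₀ a₁ b₀ b₁ : ℂ) :
    eval ![a₀,a₁,b₀,b₁] (pderiv 2 (Fc c)) =
      3*(c 0 0*a₀^3 + c 1 0*a₀^2*a₁ + c 2 0*a₀*a₁^2 + c 3 0*a₁^3)*b₀^2
    + 2*(c 0 1*a₀^3 + c 1 1*a₀^2*a₁ + c 2 1*a₀*a₁^2 + c 3 1*a₁^3)*b₀*b₁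
    + (c 0 2*a₀^3 + c 1 2*a₀^2*a₁ + c 2 2*a₀*a₁^2 + c 3 2*a₁^3)*b₁^2 := by
  simp [Fc, Finset.sum_range_succ, pderiv_mul, pderiv_X_self, pderiv_X_of_ne, pderiv_C, pderiv_pow]
  ring

lemma ev3 (c : ℕ → ℕ → ℂ) (a₀ a₁ b₀ b₁ : ℂ) :
    eval ![a₀,a₁,b₀,b₁] (pderiv 3 (Fc c)) =
      (c 0 1*a₀^3 + c 1 1*a₀^2*a₁ + c 2 1*a₀*a₁^2 + c 3 1*a₁^3)*b₀^2
    + 2*(c 0 2*a₀^3 + c 1 2*a₀^2*a₁ + c 2 2*a₀*a₁^2 + c 3 2*a₁^3)*b₀*b₁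
    + 3*(c 0 3*a₀^3 + c 1 3*a₀^2*a₁ + c 2 3*a₀*a₁^2 + c 3 3*a₁^3)*b₁^2 := by
  simp [Fc, Finset.sum_range_succ, pderiv_mul, pderiv_X_self, pderiv_X_of_ne, pderiv_C, pderiv_pow]
  ring

lemma factor (a₀ a₁ u0 u1 u2 u3 v0 v1 v2 v3 : ℂ) (c : ℕ → ℕ → ℂ)
    (e00 : c 0 0 = a₁^2*u0) (e10 : c 1 0 = a₁^2*v0 - 2*a₀*a₁*u0)
    (e20 : c 2 0 = a₀^2*u0 - 2*a₀*a₁*v0) (e30 : c 3 0 = a₀^2*v0)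
    (e01 : c 0 1 = a₁^2*u1) (e11 : c 1 1 = a₁^2*v1 - 2*a₀*a₁*u1)
    (e21 : c 2 1 = a₀^2*u1 - 2*a₀*a₁*v1) (e31 : c 3 1 = a₀^2*v1)
    (e02 : c 0 2 = a₁^2*u2) (e12 : c 1 2 = a₁^2*v2 - 2*a₀*a₁*u2)
    (e22 : c 2 2 = a₀^2*u2 - 2*a₀*a₁*v2) (e32 : c 3 2 = a₀^2*v2)
    (e03 : c 0 3 = a₁^2*u3) (e13 : c 1 3 = a₁^2*v3 - 2*a₀*a₁*u3)
    (e23 : c 2 3 = a₀^2*u3 - 2*a₀*a₁*v3) (e33 : c 3 3 = a₀^2*v3) :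
    Fc c = (C a₁ * X 0 - C a₀ * X 1)^2 * Gc u0 u1 u2 u3 v0 v1 v2 v3 := by
  simp only [Fc, Gc, Finset.sum_range_succ, Finset.sum_range_zero,
    e00, e10, e20, e30, e01, e11, e21, e31, e02, e12, e22, e32, e03, e13, e23, e33,
    map_sub, map_mul, map_add, map_pow, map_ofNat]
  ring

lemma Xpow_whom (w : Fin 4 → ℕ) (k : Fin 4) (p : ℕ) :
    IsWeightedHomogeneous w ((X k : P4) ^ p) (p * w k) := by
  rw [X_pow_eq_monomial]
  apply isWeightedHomogeneous_monomial
  rw [weight_four]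
  fin_cases k <;> simp [Finsupp.single_apply]

lemma term_mem (u v : ℂ) (p q : ℕ) (hpq : p + q = 3) :
    (C u * X 0 + C v * X 1 : P4) * X 2^p * X 3^q ∈ V13 := by
  have lin : IsWeightedHomogeneous wx ((C u * X 0 + C v * X 1 : P4)) 1 := by
    apply MvPolynomial.IsWeightedHomogeneous.add
    · simpa [wx] using (isWeightedHomogeneous_C wx u (σ := Fin 4)).mul
        (isWeightedHomogeneous_X ℂ wx 0)
    · simpa [wx] using (isWeightedHomogeneous_C wx v (σ := Fin 4)).mul
        (isWeightedHomogeneous_X ℂ wx 1)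
  have liny : IsWeightedHomogeneous wy ((C u * X 0 + C v * X 1 : P4)) 0 := by
    apply MvPolynomial.IsWeightedHomogeneous.add
    · simpa [wy] using (isWeightedHomogeneous_C wy u (σ := Fin 4)).mul
        (isWeightedHomogeneous_X ℂ wy 0)
    · simpa [wy] using (isWeightedHomogeneous_C wy v (σ := Fin 4)).mul
        (isWeightedHomogeneous_X ℂ wy 1)
  constructor
  · show IsWeightedHomogeneous wx _ _
    have hd : (1 : ℕ) + p * wx 2 + q * wx 3 = 1 := by simp [wx]
    have h' := (lin.mul (Xpow_whom wx 2 p)).mul (Xpow_whom wx 3 q)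
    rwa [hd] at h'
  · show IsWeightedHomogeneous wy _ _
    have hd : (0 : ℕ) + p * wy 2 + q * wy 3 = 3 := by simp [wy]; omega
    have h' := (liny.mul (Xpow_whom wy 2 p)).mul (Xpow_whom wy 3 q)
    rwa [hd] at h'

lemma Gc_mem (u0 u1 u2 u3 v0 v1 v2 v3 : ℂ) : Gc u0 u1 u2 u3 v0 v1 v2 v3 ∈ V13 := by
  exact Submodule.add_mem _ (Submodule.add_mem _ (Submodule.add_mem _
    (term_mem u0 v0 3 0 rfl) (term_mem u1 v1 2 1 rfl)) (term_mem u2 v2 1 2 rfl))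
    (term_mem u3 v3 0 3 rfl)

lemma finrank_V13 : Module.finrank ℂ V13 = 8 := by
  have hinj : Function.Injective (fun p : Fin 2 × Fin 4 => Dm 1 3 p.1.val p.2.val) := by
    intro p q h
    obtain ⟨e0, e1, e2, e3⟩ := Dm_apply 1 3 p.1.val p.2.val
    obtain ⟨f0, f1, f2, f3⟩ := Dm_apply 1 3 q.1.val q.2.val
    have h1 := DFunLike.congr_fun h 1
    have h3 := DFunLike.congr_fun h 3
    simp only [e1, e3, f1, f3] at h1 h3
    exact Prod.ext (Fin.ext h1) (Fin.ext h3)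
  have li : LinearIndependent ℂ (fun p : Fin 2 × Fin 4 => (monomial (Dm 1 3 p.1.val p.2.val) (1:ℂ) : P4)) := by
    have := (MvPolynomial.basisMonomials (Fin 4) ℂ).linearIndependent.comp
      (fun p : Fin 2 × Fin 4 => Dm 1 3 p.1.val p.2.val) hinj
    rw [coe_basisMonomials] at this; exact this
  have hspan : V13 = Submodule.span ℂ
      (Set.range (fun p : Fin 2 × Fin 4 => (monomial (Dm 1 3 p.1.val p.2.val) (1:ℂ) : P4))) := by
    apply le_antisymm
    · intro f hf
      obtain ⟨hx1, hy1⟩ := Submodule.mem_inf.1 hf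
      rw [dec 1 3 f hx1 hy1]
      apply Submodule.sum_mem
      intro i hi
      apply Submodule.sum_mem
      intro j hj
      rw [Finset.mem_range] at hi hj
      have : (monomial (Dm 1 3 i j) (coeff (Dm 1 3 i j) f) : P4)
          = coeff (Dm 1 3 i j) f • monomial (Dm 1 3 i j) (1:ℂ) := by
        rw [smul_monomial, smul_eq_mul, mul_one]
      rw [this]
      exact Submodule.smul_mem _ _ (Submodule.subset_span ⟨(⟨i, by omega⟩, ⟨j, by omega⟩), rfl⟩)
    · rw [Submodule.span_le]
      rintro x ⟨⟨i, j⟩, rfl⟩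
      obtain ⟨e0, e1, e2, e3⟩ := Dm_apply 1 3 i.val j.val
      have hi := i.isLt
      have hj := j.isLt
      constructor
      · apply isWeightedHomogeneous_monomial
        rw [weight_four, e0, e1, e2, e3]
        simp [wx]; omega
      · apply isWeightedHomogeneous_monomial
        rw [weight_four, e0, e1, e2, e3]
        simp [wy]; omega
  rw [hspan, finrank_span_eq_card li]
  simp

lemma lne (a₀ a₁ : ℂ) (ha : ¬(a₀ = 0 ∧ a₁ = 0)) :
    (C a₁ * X 0 - C a₀ * X 1 : P4) ≠ 0 := by
  intro h
  apply ha
  constructor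
  · have h0 := congrArg (eval ![0,1,0,0]) h
    simpa using h0
  · have h1 := congrArg (eval ![1,0,0,0]) h
    simpa using h1

lemma fwd (a₀ a₁ : ℂ) (g : P4) (hg : g ∈ V13) :
    (C a₁ * X 0 - C a₀ * X 1)^2 * g ∈ V33 ∧
    ∀ b₀ b₁ : ℂ, SingularAt ((C a₁ * X 0 - C a₀ * X 1)^2 * g) ![a₀,a₁,b₀,b₁] := by
  obtain ⟨hg1, hg2⟩ := Submodule.mem_inf.1 hg
  have hlx : IsWeightedHomogeneous wx (C a₁ * X 0 - C a₀ * X 1 : P4) 1 := by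
    have m1 : (C a₁ * X 0 : P4) ∈ weightedHomogeneousSubmodule ℂ wx 1 := by
      simpa [wx] using (isWeightedHomogeneous_C wx a₁ (σ := Fin 4)).mul
        (isWeightedHomogeneous_X ℂ wx 0)
    have m2 : (C a₀ * X 1 : P4) ∈ weightedHomogeneousSubmodule ℂ wx 1 := by
      simpa [wx] using (isWeightedHomogeneous_C wx a₀ (σ := Fin 4)).mul
        (isWeightedHomogeneous_X ℂ wx 1)
    exact sub_mem m1 m2
  have hly : IsWeightedHomogeneous wy (C a₁ * X 0 - C a₀ * X 1 : P4) 0 := by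
    have m1 : (C a₁ * X 0 : P4) ∈ weightedHomogeneousSubmodule ℂ wy 0 := by
      simpa [wy] using (isWeightedHomogeneous_C wy a₁ (σ := Fin 4)).mul
        (isWeightedHomogeneous_X ℂ wy 0)
    have m2 : (C a₀ * X 1 : P4) ∈ weightedHomogeneousSubmodule ℂ wy 0 := by
      simpa [wy] using (isWeightedHomogeneous_C wy a₀ (σ := Fin 4)).mul
        (isWeightedHomogeneous_X ℂ wy 1)
    exact sub_mem m1 m2
  constructor
  · constructor
    · show IsWeightedHomogeneous wx _ _
      rw [pow_two]
      simpa using (hlx.mul hlx).mul hg1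
    · show IsWeightedHomogeneous wy _ _
      rw [pow_two]
      simpa using (hly.mul hly).mul hg2
  · intro b₀ b₁ k
    have hl0 : eval ![a₀,a₁,b₀,b₁] (C a₁ * X 0 - C a₀ * X 1 : P4) = 0 := by
      simp; ring
    rw [pow_two, pderiv_mul, pderiv_mul]
    simp [hl0]

theorem singular_along_ruling_line
    (a₀ a₁ : ℂ) (ha : ¬(a₀ = 0 ∧ a₁ = 0)) :
    ∃ S : Submodule ℂ P4,
      (S : Set P4) =
        {f : P4 | f ∈ V33 ∧ ∀ b₀ b₁ : ℂ, ¬(b₀ = 0 ∧ b₁ = 0) → SingularAt f ![a₀, a₁, b₀, b₁]} ∧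
      (S : Set P4) = {f : P4 | ∃ g ∈ V13, f = (C a₁ * X 0 - C a₀ * X 1) ^ 2 * g} ∧
      Module.finrank ℂ S = 8 := by
  set ℓ : P4 := C a₁ * X 0 - C a₀ * X 1 with hℓdef
  refine ⟨Submodule.map (LinearMap.mulLeft ℂ (ℓ^2)) V13, ?_, ?_, ?_⟩
  case refine_2 =>
    ext x
    simp only [Submodule.map_coe, Set.mem_image, SetLike.mem_coe, Set.mem_setOf_eq,
      LinearMap.mulLeft_apply]
    constructor
    · rintro ⟨g, hg, rfl⟩; exact ⟨g, hg, rfl⟩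
    · rintro ⟨g, hg, rfl⟩; exact ⟨g, hg, rfl⟩
  case refine_3 =>
    have hinj : Function.Injective (LinearMap.mulLeft ℂ (ℓ^2)) := by
      intro x y hxy
      simp only [LinearMap.mulLeft_apply] at hxy
      exact mul_left_cancel₀ (pow_ne_zero 2 (lne a₀ a₁ ha)) hxy
    rw [← (Submodule.equivMapOfInjective _ hinj V13).finrank_eq]
    exact finrank_V13
  · ext f
    simp only [Submodule.map_coe, Set.mem_image, SetLike.mem_coe, Set.mem_setOf_eq,
      LinearMap.mulLeft_apply]
    constructor
    · rintro ⟨g, hg, rfl⟩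
      exact ⟨(fwd a₀ a₁ g hg).1, fun b₀ b₁ _ => (fwd a₀ a₁ g hg).2 b₀ b₁⟩
    · rintro ⟨hfV, hsing⟩
      obtain ⟨hx3, hy3⟩ := Submodule.mem_inf.1 hfV
      set c : ℕ → ℕ → ℂ := fun i j => coeff (Dm 3 3 i j) f with hcdef
      have hf : f = Fc c := by
        conv_lhs => rw [dec 3 3 f hx3 hy3]
        norm_num [Fc, monomial_Dm, hcdef]
      have hb10 : ¬((1:ℂ) = 0 ∧ (0:ℂ) = 0) := by norm_num
      have hb01 : ¬((0:ℂ) = 0 ∧ (1:ℂ) = 0) := by norm_num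
      have hb11 : ¬((1:ℂ) = 0 ∧ (1:ℂ) = 0) := by norm_num
      have hb1m : ¬((1:ℂ) = 0 ∧ (-1:ℂ) = 0) := by norm_num
      -- k = 0 instances
      have h00 := hsing 1 0 hb10 0; rw [hf, ev0] at h00
      have h01 := hsing 0 1 hb01 0; rw [hf, ev0] at h01
      have h02 := hsing 1 1 hb11 0; rw [hf, ev0] at h02
      have h03 := hsing 1 (-1) hb1m 0; rw [hf, ev0] at h03
      -- k = 1 instances
      have h10 := hsing 1 0 hb10 1; rw [hf, ev1] at h10
      have h11 := hsing 0 1 hb01 1; rw [hf, ev1] at h11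
      have h12 := hsing 1 1 hb11 1; rw [hf, ev1] at h12
      have h13 := hsing 1 (-1) hb1m 1; rw [hf, ev1] at h13
      -- k = 2 instances
      have h20 := hsing 1 0 hb10 2; rw [hf, ev2] at h20
      have h21 := hsing 0 1 hb01 2; rw [hf, ev2] at h21
      have h22 := hsing 1 1 hb11 2; rw [hf, ev2] at h22
      -- k = 3 instances
      have h31 := hsing 0 1 hb01 3; rw [hf, ev3] at h31
      -- Q j : x₀-derivative conditions
      have hQ0 : 3*c 0 0*a₀^2 + 2*c 1 0*a₀*a₁ + c 2 0*a₁^2 = 0 := by linear_combination h00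
      have hQ3 : 3*c 0 3*a₀^2 + 2*c 1 3*a₀*a₁ + c 2 3*a₁^2 = 0 := by linear_combination h01
      have hQ1 : 3*c 0 1*a₀^2 + 2*c 1 1*a₀*a₁ + c 2 1*a₁^2 = 0 := by
        linear_combination (1/2)*h02 - (1/2)*h03 - hQ3
      have hQ2 : 3*c 0 2*a₀^2 + 2*c 1 2*a₀*a₁ + c 2 2*a₁^2 = 0 := by
        linear_combination (1/2)*h02 + (1/2)*h03 - hQ0
      -- R j : x₁-derivative conditions
      have hR0 : c 1 0*a₀^2 + 2*c 2 0*a₀*a₁ + 3*c 3 0*a₁^2 = 0 := by linear_combination h10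
      have hR3 : c 1 3*a₀^2 + 2*c 2 3*a₀*a₁ + 3*c 3 3*a₁^2 = 0 := by linear_combination h11
      have hR1 : c 1 1*a₀^2 + 2*c 2 1*a₀*a₁ + 3*c 3 1*a₁^2 = 0 := by
        linear_combination (1/2)*h12 - (1/2)*h13 - hR3
      have hR2 : c 1 2*a₀^2 + 2*c 2 2*a₀*a₁ + 3*c 3 2*a₁^2 = 0 := by
        linear_combination (1/2)*h12 + (1/2)*h13 - hR0
      -- P j : value conditions
      have hP0 : c 0 0*a₀^3 + c 1 0*a₀^2*a₁ + c 2 0*a₀*a₁^2 + c 3 0*a₁^3 = 0 := by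
        linear_combination (1/3)*h20
      have hP2 : c 0 2*a₀^3 + c 1 2*a₀^2*a₁ + c 2 2*a₀*a₁^2 + c 3 2*a₁^3 = 0 := by
        linear_combination h21
      have hP1 : c 0 1*a₀^3 + c 1 1*a₀^2*a₁ + c 2 1*a₀*a₁^2 + c 3 1*a₁^3 = 0 := by
        linear_combination (1/2)*h22 - (3/2)*hP0 - (1/2)*hP2
      have hP3 : c 0 3*a₀^3 + c 1 3*a₀^2*a₁ + c 2 3*a₀*a₁^2 + c 3 3*a₁^3 = 0 := by
        linear_combination (1/3)*h31
      obtain ⟨u0, v0, e00, e10, e20, e30⟩ :=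
        cubic_double_root a₀ a₁ (c 0 0) (c 1 0) (c 2 0) (c 3 0) ha hP0 hQ0 hR0
      obtain ⟨u1, v1, e01, e11, e21, e31⟩ :=
        cubic_double_root a₀ a₁ (c 0 1) (c 1 1) (c 2 1) (c 3 1) ha hP1 hQ1 hR1
      obtain ⟨u2, v2, e02, e12, e22, e32⟩ :=
        cubic_double_root a₀ a₁ (c 0 2) (c 1 2) (c 2 2) (c 3 2) ha hP2 hQ2 hR2
      obtain ⟨u3, v3, e03, e13, e23, e33⟩ :=
        cubic_double_root a₀ a₁ (c 0 3) (c 1 3) (c 2 3) (c 3 3) ha hP3 hQ3 hR3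
      refine ⟨Gc u0 u1 u2 u3 v0 v1 v2 v3, Gc_mem u0 u1 u2 u3 v0 v1 v2 v3, ?_⟩
      rw [hf]
      exact (factor a₀ a₁ u0 u1 u2 u3 v0 v1 v2 v3 c
        e00 e10 e20 e30 e01 e11 e21 e31 e02 e12 e22 e32 e03 e13 e23 e33).symm

end
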